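/- (Identity (4.2), difference-quotient formula for m.) Fix y > 0 and σ₁, σ₂ > 0 with σ₁ ≠ σ₂, and write m₁ = m(σ₁), m₂ = m(σ₂) where m(σ) = −(1+σ−y−√((1+y+σ)²−4y))/(2yσ). Then (1+y m₁)(1+y m₂) − y m₁ m₂ ≠ 0 and (m₂ − m₁)/(σ₁ − σ₂) = m₁ m₂ (1+y m₁)(1+y m₂) / ( (1+y m₁)(1+y m₂) − y m₁ m₂ ). -/

import Mathlib

lemma mp_root_props (y σ : ℝ) (hy : 0 < y) (hσ : 0 < σ)
    (m : ℝ) (hm : m = -((1 + σ - y - Real.sqrt ((1 + y + σ)^2 - 4*y)) / (2*y*σ))) :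
    0 < m ∧ y*σ*m^2 + (1 + σ - y)*m - 1 = 0 := by
  have hΔ : (1 + y + σ)^2 - 4*y = (1 + σ - y)^2 + 4*y*σ := by ring
  have hΔ0 : 0 ≤ (1 + y + σ)^2 - 4*y := by nlinarith
  set s := Real.sqrt ((1 + y + σ)^2 - 4*y) with hs
  have hs0 : 0 ≤ s := Real.sqrt_nonneg _
  have hsq : s^2 = (1 + σ - y)^2 + 4*y*σ := by
    rw [Real.sq_sqrt hΔ0, hΔ]
  have hsgt : 1 + σ - y < s := by nlinarith
  have hyσ : 0 < 2*y*σ := by positivity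
  have hmpos : 0 < m := by
    rw [hm]
    have : (1 + σ - y - s) / (2*y*σ) < 0 := div_neg_of_neg_of_pos (by linarith) hyσ
    linarith
  refine ⟨hmpos, ?_⟩
  rw [hm]
  field_simp
  nlinarith [hsq]

/-- Identity (4.2): the difference-quotient formula for `m`. -/
theorem mp_difference_quotient (y σ₁ σ₂ : ℝ) (hy : 0 < y)
    (hσ₁ : 0 < σ₁) (hσ₂ : 0 < σ₂) (hne : σ₁ ≠ σ₂)
    (m₁ m₂ : ℝ)
    (hm₁ : m₁ = -((1 + σ₁ - y - Real.sqrt ((1 + y + σ₁)^2 - 4*y)) / (2*y*σ₁)))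
    (hm₂ : m₂ = -((1 + σ₂ - y - Real.sqrt ((1 + y + σ₂)^2 - 4*y)) / (2*y*σ₂))) :
    (1 + y*m₁) * (1 + y*m₂) - y*m₁*m₂ ≠ 0 ∧
    (m₂ - m₁) / (σ₁ - σ₂) =
      m₁ * m₂ * (1 + y*m₁) * (1 + y*m₂) / ((1 + y*m₁) * (1 + y*m₂) - y*m₁*m₂) := by
  obtain ⟨hp₁, he₁⟩ := mp_root_props y σ₁ hy hσ₁ m₁ hm₁
  obtain ⟨hp₂, he₂⟩ := mp_root_props y σ₂ hy hσ₂ m₂ hm₂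
  have hP : 0 < m₁ * m₂ * (1 + y*m₁) * (1 + y*m₂) := by positivity
  have key : (σ₁ - σ₂) * (m₁ * m₂ * (1 + y*m₁) * (1 + y*m₂)) =
      (m₂ - m₁) * ((1 + y*m₁) * (1 + y*m₂) - y*m₁*m₂) := by
    linear_combination (m₂*(1 + y*m₂)) * he₁ - (m₁*(1 + y*m₁)) * he₂
  have hD : (1 + y*m₁) * (1 + y*m₂) - y*m₁*m₂ ≠ 0 := by
    intro h
    rw [h, mul_zero] at key
    have := mul_eq_zero.mp key
    rcases this with h1 | h2
    · exact hne (by linarith [sub_eq_zero.mp h1])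
    · exact hP.ne' h2
  refine ⟨hD, ?_⟩
  have hσne : σ₁ - σ₂ ≠ 0 := sub_ne_zero.mpr hne
  rw [div_eq_div_iff hσne hD]
  linear_combination -key
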